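/- Let Q ∈ ℤ[X] and suppose there exist N ∈ ℕ and non-negative integers a_0, …, a_N, with a_n > 0 for at least one n ≥ 1, such that Q(t + t^{−1}) = ∑_{n=0}^N a_n·χ_n(t) in ℤ[t, t^{−1}]. Then: (i) Q'(2) > 0; (ii) |Q(y)| < Q(2) for every real y with −2 < y < 2; and (iii) |Q(−2)| = Q(2) if and only if all n with a_n > 0 have the same parity. -/

import Mathlib

open LaurentPolynomial

/-- The formal character `χ_n(t)` of the indecomposable tilting module `T(n)` of `SL₂`
in characteristic 2, as a Laurent polynomial: writing
`n+1 = 2^j + a_{j−1}·2^{j−1} + ⋯ + a_0` in binary,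
`χ_n(t) = (∑_{l<2^j} t^{2^j−1−2l}) · ∏_{i : a_i = 1} (t^{2^i} + t^{−2^i})`. -/
noncomputable def chiT (n : ℕ) : LaurentPolynomial ℤ :=
  (∑ l ∈ Finset.range (2 ^ Nat.log 2 (n + 1)),
      T ((2 : ℤ) ^ Nat.log 2 (n + 1) - 1 - 2 * (l : ℤ))) *
    ∏ i ∈ (Finset.range (Nat.log 2 (n + 1))).filter (fun i => (n + 1).testBit i),
      (T ((2 : ℤ) ^ i) + T (-(2 : ℤ) ^ i))

section Aux
open Finset Polynomial Complex

noncomputable def ev {A : Type*} [CommRing A] (u : Aˣ) : LaurentPolynomial ℤ →ₐ[ℤ] A :=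
  AddMonoidAlgebra.lift ℤ A ℤ ((Units.coeHom A).comp ((zpowersHom Aˣ u)))

lemma ev_T {A : Type*} [CommRing A] (u : Aˣ) (k : ℤ) : ev u (T k) = ↑(u ^ k) := by
  rw [ev, T, AddMonoidAlgebra.lift_single]
  simp [zpowersHom_apply]

def bitset (n : ℕ) : Finset ℕ :=
  (Finset.range (Nat.log 2 (n + 1))).filter (fun i => (n + 1).testBit i)

def Dd (n : ℕ) : ℕ := 2 ^ (Nat.log 2 (n + 1) + (bitset n).card)

lemma ev_chiT {A : Type*} [CommRing A] (u : Aˣ) (n : ℕ) :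
    ev u (chiT n) =
      (∑ l ∈ Finset.range (2 ^ Nat.log 2 (n + 1)),
        ((u ^ ((2 : ℤ) ^ Nat.log 2 (n + 1) - 1 - 2 * (l : ℤ)) : Aˣ) : A)) *
      ∏ i ∈ bitset n, (((u ^ ((2:ℤ) ^ i) : Aˣ) : A) + ((u ^ (-(2:ℤ) ^ i) : Aˣ) : A)) := by
  rw [chiT, map_mul, map_sum, map_prod]
  simp only [map_add, ev_T, bitset]

lemma key_eq {A : Type*} [CommRing A] (Q : Polynomial ℤ) (N : ℕ) (a : ℕ → ℕ)
    (hQ : Polynomial.aeval (T 1 + T (-1)) Q =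
      ∑ n ∈ Finset.range (N + 1), (a n : LaurentPolynomial ℤ) * chiT n) (u : Aˣ) :
    Polynomial.aeval ((u : A) + ((u⁻¹ : Aˣ) : A)) Q
      = ∑ n ∈ Finset.range (N + 1), (a n : A) * ev u (chiT n) := by
  have h1 : ev u (Polynomial.aeval (T 1 + T (-1)) Q)
      = Polynomial.aeval (ev u (T 1 + T (-1))) Q :=
    (Polynomial.aeval_algHom_apply (ev u) _ Q).symm
  have h2 : ev u (T 1 + T (-1)) = (u : A) + ((u⁻¹ : Aˣ) : A) := by
    rw [map_add, ev_T, ev_T, zpow_one, zpow_neg_one]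
  rw [h2] at h1
  rw [← h1, hQ, map_sum]
  simp [map_mul]

lemma lg_eq_zero_iff (n : ℕ) : Nat.log 2 (n+1) = 0 ↔ n = 0 := by
  rw [Nat.log_eq_zero_iff]; omega

lemma one_le_lg {n : ℕ} (hn : 1 ≤ n) : 1 ≤ Nat.log 2 (n+1) := by
  rw [Nat.le_log_iff_pow_le (by norm_num) (by omega)]; omega

lemma ev_chiT_one (n : ℕ) : ev (1 : ℤˣ) (chiT n) = (Dd n : ℤ) := by
  rw [ev_chiT]; simp [Dd, pow_add]

lemma units_neg_one_zpow (z : ℤ) :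
    (((-1 : ℤˣ) ^ z : ℤˣ) : ℤ) = if Even z then 1 else -1 := by
  rcases Int.even_or_odd z with h | h
  · simp [h.neg_one_zpow, h]
  · rcases h with ⟨m, hm⟩
    have : ((-1 : ℤˣ) ^ z : ℤˣ) = -1 := by
      subst hm
      rw [zpow_add, zpow_mul, zpow_one]
      norm_num
    rw [this]
    have : ¬ Even z := by rw [hm]; exact Int.not_even_iff_odd.mpr ⟨m, rfl⟩
    simp [this]

lemma ev_chiT_neg_one (n : ℕ) :
    ev (-1 : ℤˣ) (chiT n) = (-1) ^ n * (Dd n : ℤ) := by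
  rcases Nat.eq_zero_or_pos n with rfl | hn
  · rw [ev_chiT]
    norm_num [bitset, Dd]
  have hL : 1 ≤ Nat.log 2 (n+1) := one_le_lg hn
  rw [ev_chiT]
  have hsum : (∑ l ∈ Finset.range (2 ^ Nat.log 2 (n + 1)),
      (((-1 : ℤˣ) ^ ((2 : ℤ) ^ Nat.log 2 (n + 1) - 1 - 2 * (l : ℤ)) : ℤˣ) : ℤ))
      = -(2 ^ Nat.log 2 (n+1)) := by
    rw [Finset.sum_congr rfl (fun l _ => units_neg_one_zpow _)]
    have h2 : Even ((2:ℤ) ^ Nat.log 2 (n+1)) :=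
      Int.even_pow.mpr ⟨even_two, by omega⟩
    have key : ∀ l ∈ Finset.range (2 ^ Nat.log 2 (n + 1)),
        (if Even ((2 : ℤ) ^ Nat.log 2 (n + 1) - 1 - 2 * (l : ℤ)) then (1:ℤ) else -1) = -1 := by
      intro l _
      have : ¬ Even ((2 : ℤ) ^ Nat.log 2 (n + 1) - 1 - 2 * (l : ℤ)) := by
        rcases h2 with ⟨m, hm⟩
        rw [hm]
        rw [Int.even_sub, Int.even_sub]
        simp [Int.even_add_one, parity_simps]
      simp [this]
    rw [Finset.sum_congr rfl key]
    simp [Finset.sum_const]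
  rw [hsum]
  have hfac : ∀ i ∈ bitset n,
      (((-1:ℤˣ) ^ ((2:ℤ) ^ i) : ℤˣ) : ℤ) + (((-1:ℤˣ) ^ (-(2:ℤ) ^ i) : ℤˣ) : ℤ)
        = 2 * (if i = 0 then -1 else 1) := by
    intro i _
    rw [units_neg_one_zpow, units_neg_one_zpow]
    rcases Nat.eq_zero_or_pos i with rfl | hi
    · norm_num
    · have : Even ((2:ℤ) ^ i) := Int.even_pow.mpr ⟨even_two, by omega⟩
      simp [this, this.neg, hi.ne']
  rw [Finset.prod_congr rfl hfac, Finset.prod_mul_distrib, Finset.prod_const]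
  have hprodsign : (∏ i ∈ bitset n, (if i = 0 then (-1:ℤ) else 1)) =
      if 0 ∈ bitset n then -1 else 1 := by
    by_cases h0 : 0 ∈ bitset n
    · rw [← Finset.mul_prod_erase _ _ h0]
      rw [Finset.prod_eq_one (fun i hi => by simp [(Finset.ne_of_mem_erase hi)])]
      simp [h0]
    · rw [Finset.prod_eq_one (fun i hi => by
        have : i ≠ 0 := by rintro rfl; exact h0 hi
        simp [this])]
      simp [h0]
  rw [hprodsign]
  have hbit : (0 ∈ bitset n) ↔ n % 2 = 0 := by
    rw [bitset, Finset.mem_filter, Finset.mem_range, Nat.testBit_zero, decide_eq_true_eq]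
    constructor
    · rintro ⟨-, h⟩; omega
    · intro h; exact ⟨hL, by omega⟩
  by_cases h0 : 0 ∈ bitset n
  · have he : (-1:ℤ) ^ n = 1 := Even.neg_one_pow (Nat.even_iff.mpr (hbit.mp h0))
    rw [he]
    simp only [h0, if_true, Dd, pow_add]
    push_cast
    ring
  · have ho : (-1:ℤ) ^ n = -1 := Odd.neg_one_pow (Nat.odd_iff.mpr (by
      have := (not_iff_not.mpr hbit).mp h0; omega))
    rw [ho]
    simp only [h0, if_false, Dd, pow_add]
    push_cast
    ring

lemma norm_one_add_lt {v : ℂ} (hv : ‖v‖ = 1) (hne : v ≠ 1) : ‖1 + v‖ < 2 := by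
  have h1 : ‖v‖^2 = v.re^2 + v.im^2 := by
    rw [Complex.sq_norm, Complex.normSq_apply]; ring
  have h2 : ‖(1:ℂ) + v‖^2 = (1 + v.re)^2 + v.im^2 := by
    rw [Complex.sq_norm, Complex.normSq_apply]
    simp
    ring
  have hre : v.re < 1 := by
    rcases lt_or_ge v.re 1 with h | h
    · exact h
    · exfalso
      have him : v.im = 0 := by nlinarith [hv, h1]
      have : v.re = 1 := by nlinarith [hv, h1]
      exact hne (Complex.ext this him)
  have hnn : (0:ℝ) ≤ ‖(1:ℂ) + v‖ := norm_nonneg _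
  nlinarith [hv, h1, h2]

lemma norm_unit_zpow {u : ℂˣ} (hu : ‖(u:ℂ)‖ = 1) (z : ℤ) : ‖((u ^ z : ℂˣ) : ℂ)‖ = 1 := by
  rw [Units.val_zpow_eq_zpow_val, norm_zpow, hu, one_zpow]

lemma chiT_norm_le {u : ℂˣ} (hu : ‖(u:ℂ)‖ = 1) (n : ℕ) :
    ‖ev u (chiT n)‖ ≤ (Dd n : ℝ) := by
  rw [ev_chiT, norm_mul]
  have hS : ‖∑ l ∈ Finset.range (2 ^ Nat.log 2 (n + 1)),
      ((u ^ ((2 : ℤ) ^ Nat.log 2 (n + 1) - 1 - 2 * (l : ℤ)) : ℂˣ) : ℂ)‖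
      ≤ (2 : ℝ) ^ Nat.log 2 (n + 1) := by
    calc _ ≤ ∑ l ∈ Finset.range (2 ^ Nat.log 2 (n + 1)),
        ‖((u ^ ((2 : ℤ) ^ Nat.log 2 (n + 1) - 1 - 2 * (l : ℤ)) : ℂˣ) : ℂ)‖ :=
          norm_sum_le _ _
    _ = (2 : ℝ) ^ Nat.log 2 (n + 1) := by
        rw [Finset.sum_congr rfl (fun l _ => norm_unit_zpow hu _)]
        simp
  have hP : ‖∏ i ∈ bitset n, (((u ^ ((2:ℤ) ^ i) : ℂˣ) : ℂ) + ((u ^ (-(2:ℤ) ^ i) : ℂˣ) : ℂ))‖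
      ≤ (2 : ℝ) ^ (bitset n).card := by
    rw [norm_prod]
    calc _ ≤ ∏ i ∈ bitset n, (2:ℝ) := by
          apply Finset.prod_le_prod (fun i _ => norm_nonneg _)
          intro i _
          calc ‖_ + _‖ ≤ ‖_‖ + ‖_‖ := norm_add_le _ _
          _ = 2 := by rw [norm_unit_zpow hu, norm_unit_zpow hu]; norm_num
    _ = (2:ℝ) ^ (bitset n).card := by rw [Finset.prod_const]
  calc _ ≤ (2 : ℝ) ^ Nat.log 2 (n + 1) * (2 : ℝ) ^ (bitset n).card :=
      mul_le_mul hS hP (norm_nonneg _) (by positivity)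
  _ = (Dd n : ℝ) := by rw [Dd]; push_cast [pow_add]; ring

lemma chiT_norm_lt {u : ℂˣ} (hu : ‖(u:ℂ)‖ = 1) (hu2 : ((u:ℂ))^2 ≠ 1) {n : ℕ}
    (hn : 1 ≤ n) : ‖ev u (chiT n)‖ < (Dd n : ℝ) := by
  set L := Nat.log 2 (n + 1) with hLdef
  have hL : 1 ≤ L := by
    rw [hLdef, Nat.le_log_iff_pow_le (by norm_num) (by omega)]; omega
  have hm : 2 ≤ 2 ^ L := by
    calc 2 = 2^1 := rfl
    _ ≤ 2^L := Nat.pow_le_pow_right (by norm_num) hL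
  rw [ev_chiT, norm_mul]
  set f : ℕ → ℂ := fun l => ((u ^ ((2 : ℤ) ^ L - 1 - 2 * (l : ℤ)) : ℂˣ) : ℂ) with hf
  have hsplit : ∑ l ∈ Finset.range (2 ^ L), f l
      = (f 0 + f 1) + ∑ l ∈ Finset.Ico 2 (2 ^ L), f l := by
    rw [Finset.range_eq_Ico, ← Finset.sum_Ico_consecutive _ (by omega : 0 ≤ 2) hm]
    congr 1
    rw [Finset.sum_eq_sum_Ico_succ_bot (by omega), Finset.sum_eq_sum_Ico_succ_bot (by omega)]
    simp
  have hf01 : ‖f 0 + f 1‖ < 2 := by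
    have hval : ∀ z : ℤ, ((u ^ z : ℂˣ) : ℂ) = (u:ℂ) ^ z :=
      fun z => Units.val_zpow_eq_zpow_val u z
    have hu0 : (u:ℂ) ≠ 0 := u.ne_zero
    have hp2 : ((u:ℂ)) ^ ((2:ℤ)) = ((u:ℂ)) ^ (2:ℕ) := by
      rw [← zpow_natCast]; norm_num
    have he : f 0 + f 1 = ((u:ℂ) ^ ((2 : ℤ) ^ L - 1 - 2)) * (1 + ((u:ℂ))^2) := by
      rw [hf]
      simp only [Nat.cast_zero, Nat.cast_one, mul_zero, mul_one, sub_zero, hval]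
      rw [show ((2:ℤ)^L - 1 : ℤ) = ((2:ℤ)^L - 1 - 2) + 2 by ring, zpow_add₀ hu0]
      rw [show ((2:ℤ)^L - 1 - 2 + 2 - 2 : ℤ) = ((2:ℤ)^L - 1 - 2) by ring]
      simp only [hp2]
      ring
    rw [he, norm_mul, norm_zpow, hu, one_zpow, one_mul]
    exact norm_one_add_lt (by rw [norm_pow, hu, one_pow]) (fun h => hu2 (by rw [← h]))
  have hrest : ‖∑ l ∈ Finset.Ico 2 (2 ^ L), f l‖ ≤ (2:ℝ)^L - 2 := by
    calc _ ≤ ∑ l ∈ Finset.Ico 2 (2 ^ L), ‖f l‖ := norm_sum_le _ _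
    _ = ((2^L - 2 : ℕ) : ℝ) := by
        rw [Finset.sum_congr rfl (fun l _ => norm_unit_zpow hu _), Finset.sum_const]
        simp [Nat.card_Ico]
    _ = (2:ℝ)^L - 2 := by push_cast [hm]; ring
  have hS : ‖∑ l ∈ Finset.range (2 ^ L), f l‖ < (2:ℝ)^L := by
    rw [hsplit]
    calc ‖_‖ ≤ ‖f 0 + f 1‖ + ‖∑ l ∈ Finset.Ico 2 (2 ^ L), f l‖ := norm_add_le _ _
    _ < 2 + ((2:ℝ)^L - 2) := by
        apply add_lt_add_of_lt_of_le hf01 hrest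
    _ = (2:ℝ)^L := by ring
  have hP : ‖∏ i ∈ bitset n, (((u ^ ((2:ℤ) ^ i) : ℂˣ) : ℂ) + ((u ^ (-(2:ℤ) ^ i) : ℂˣ) : ℂ))‖
      ≤ (2 : ℝ) ^ (bitset n).card := by
    rw [norm_prod]
    calc _ ≤ ∏ i ∈ bitset n, (2:ℝ) := by
          apply Finset.prod_le_prod (fun i _ => norm_nonneg _)
          intro i _
          calc ‖_ + _‖ ≤ ‖_‖ + ‖_‖ := norm_add_le _ _
          _ = 2 := by rw [norm_unit_zpow hu, norm_unit_zpow hu]; norm_num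
    _ = (2:ℝ) ^ (bitset n).card := by rw [Finset.prod_const]
  calc _ ≤ ‖∑ l ∈ Finset.range (2 ^ L), f l‖ * (2 : ℝ) ^ (bitset n).card :=
      mul_le_mul_of_nonneg_left hP (norm_nonneg _)
  _ < (2:ℝ)^L * (2 : ℝ) ^ (bitset n).card :=
      mul_lt_mul_of_pos_right hS (by positivity)
  _ = (Dd n : ℝ) := by rw [Dd]; push_cast [pow_add]; ring

lemma chiT_zero : chiT 0 = 1 := by
  simp [chiT]

lemma xinv_mono {c x : ℝ} (hc : 1 ≤ c) (hx : c ≤ x) : c + c⁻¹ ≤ x + x⁻¹ := by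
  have hc0 : 0 < c := lt_of_lt_of_le one_pos hc
  have hx0 : 0 < x := lt_of_lt_of_le hc0 hx
  have hcc : c * c⁻¹ = 1 := mul_inv_cancel₀ hc0.ne'
  have hxx : x * x⁻¹ = 1 := mul_inv_cancel₀ hx0.ne'
  have h1 : 0 < c⁻¹ := inv_pos.mpr hc0
  have h2 : 0 < x⁻¹ := inv_pos.mpr hx0
  nlinarith [mul_pos h1 h2, mul_pos hc0 hx0, mul_le_mul hx (le_refl c⁻¹) h1.le hx0.le]

lemma pair_ge {t : ℝ} (ht : 1 < t) {e : ℤ} (he : e ≠ 0) :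
    t + t⁻¹ ≤ t ^ e + t ^ (-e) := by
  obtain ⟨k, hkdef⟩ : ∃ k : ℕ, k = e.natAbs := ⟨e.natAbs, rfl⟩
  have h1 : t ^ e + t ^ (-e) = t ^ ((k : ℤ)) + t ^ (-(k : ℤ)) := by
    rcases Int.natAbs_eq e with h | h
    · rw [h, ← hkdef]
    · rw [h, ← hkdef, neg_neg]; exact add_comm _ _
  have hk : 1 ≤ k := hkdef ▸ Int.natAbs_pos.mpr he
  have h2 : t ^ ((k : ℤ)) = t ^ k := zpow_natCast t _
  have h3 : t ^ (-(k : ℤ)) = (t ^ k)⁻¹ := by rw [zpow_neg, h2]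
  have h4 : t ≤ t ^ k := by
    calc t = t ^ 1 := (pow_one t).symm
    _ ≤ t ^ k := pow_le_pow_right₀ ht.le hk
  rw [h1, h2, h3]
  exact xinv_mono ht.le h4

lemma factor_ge {t : ℝ} (ht : 1 < t) (e : ℤ) : (2:ℝ) ≤ t ^ e + t ^ (-e) := by
  have ht0 : (0:ℝ) < t := lt_trans one_pos ht
  have hx : (0:ℝ) < t ^ e := zpow_pos ht0 e
  have : t ^ (-e) = (t ^ e)⁻¹ := zpow_neg t e
  rw [this]
  have h := mul_inv_cancel₀ hx.ne'
  nlinarith [sq_nonneg (t ^ e - 1), inv_pos.mpr hx]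

lemma y_gt_two {t : ℝ} (ht : 1 < t) : 2 < t + t⁻¹ := by
  have ht0 : (0:ℝ) < t := lt_trans one_pos ht
  have h := mul_inv_cancel₀ ht0.ne'
  nlinarith [sq_nonneg (t - 1), inv_pos.mpr ht0]

lemma chiT_real_ge_strong {u : ℝˣ} (hu : 1 < (u:ℝ)) {n : ℕ} (hn : 1 ≤ n) :
    (Dd n : ℝ) + ((u:ℝ) + (u:ℝ)⁻¹ - 2) ≤ ev u (chiT n) := by
  set t : ℝ := (u:ℝ) with htdef
  have ht0 : (0:ℝ) < t := lt_trans one_pos hu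
  set L := Nat.log 2 (n + 1) with hLdef
  have hL : 1 ≤ L := by
    rw [hLdef, Nat.le_log_iff_pow_le (by norm_num) (by omega)]; omega
  have hm : 2 ≤ 2 ^ L := by
    calc 2 = 2^1 := rfl
    _ ≤ 2^L := Nat.pow_le_pow_right (by norm_num) hL
  rw [ev_chiT]
  simp only [Units.val_zpow_eq_zpow_val, ← htdef]
  set S := ∑ l ∈ Finset.range (2 ^ L), t ^ ((2 : ℤ) ^ L - 1 - 2 * (l : ℤ)) with hSdef
  have hrefl : ∑ l ∈ Finset.range (2 ^ L), t ^ (-((2 : ℤ) ^ L - 1 - 2 * (l : ℤ))) = S := by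
    rw [hSdef, ← Finset.sum_range_reflect (fun l => t ^ ((2 : ℤ) ^ L - 1 - 2 * (l : ℤ)))]
    apply Finset.sum_congr rfl
    intro l hl
    have hl' : l < 2 ^ L := Finset.mem_range.mp hl
    congr 1
    rw [Nat.cast_sub (by omega), Nat.cast_sub (by omega)]
    push_cast
    ring
  have hezero : ∀ l : ℕ, ((2 : ℤ) ^ L - 1 - 2 * (l : ℤ)) ≠ 0 := by
    intro l
    obtain ⟨L', hL'⟩ : ∃ L', L = L' + 1 := ⟨L - 1, by omega⟩
    have hc : 1 ≤ (2:ℤ) ^ L' := one_le_pow₀ (by norm_num)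
    have h2 : (2:ℤ) ^ L = 2 * (2:ℤ) ^ L' := by rw [hL', pow_succ]; ring
    intro h
    omega
  have hS2 : ((2^L : ℕ) : ℝ) * (t + t⁻¹) ≤ 2 * S := by
    have : 2 * S = ∑ l ∈ Finset.range (2 ^ L),
        (t ^ ((2 : ℤ) ^ L - 1 - 2 * (l : ℤ)) + t ^ (-((2 : ℤ) ^ L - 1 - 2 * (l : ℤ)))) := by
      rw [Finset.sum_add_distrib, hrefl, hSdef, two_mul]
    rw [this]
    calc ((2^L : ℕ) : ℝ) * (t + t⁻¹) = ∑ _l ∈ Finset.range (2 ^ L), (t + t⁻¹) := by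
          rw [Finset.sum_const, Finset.card_range, nsmul_eq_mul]
    _ ≤ _ := Finset.sum_le_sum (fun l _ => pair_ge hu (hezero l))
  have hP : (2:ℝ) ^ (bitset n).card
      ≤ ∏ i ∈ bitset n, (t ^ ((2:ℤ) ^ i) + t ^ (-(2:ℤ) ^ i)) := by
    calc (2:ℝ) ^ (bitset n).card = ∏ _i ∈ bitset n, (2:ℝ) := by rw [Finset.prod_const]
    _ ≤ _ := Finset.prod_le_prod (fun _ _ => by norm_num)
        (fun i _ => by simpa [neg_pow] using factor_ge hu ((2:ℤ) ^ i))
  have hy : 2 < t + t⁻¹ := y_gt_two hu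
  have hmr : (2:ℝ) ≤ ((2^L : ℕ) : ℝ) := by exact_mod_cast hm
  have hc1 : (1:ℝ) ≤ (2:ℝ) ^ (bitset n).card := one_le_pow₀ (by norm_num)
  have hS0 : 0 ≤ S := by nlinarith
  have hDd : (Dd n : ℝ) = ((2^L : ℕ) : ℝ) * (2:ℝ) ^ (bitset n).card := by
    rw [Dd, ← hLdef]
    push_cast [pow_add]
    ring
  rw [hDd]
  have step1 : S * (2:ℝ) ^ (bitset n).card
      ≤ S * ∏ i ∈ bitset n, (t ^ ((2:ℤ) ^ i) + t ^ (-(2:ℤ) ^ i)) :=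
    mul_le_mul_of_nonneg_left hP hS0
  have hmc : (2:ℝ) ≤ ((2^L : ℕ) : ℝ) * (2:ℝ) ^ (bitset n).card := by nlinarith
  have key : (0:ℝ) ≤ (((2^L : ℕ) : ℝ) * (2:ℝ) ^ (bitset n).card - 2) * ((t + t⁻¹) - 2) :=
    mul_nonneg (by linarith) (by linarith)
  nlinarith [step1, mul_le_mul_of_nonneg_right hS2
    (by positivity : (0:ℝ) ≤ (2:ℝ) ^ (bitset n).card), key]

lemma chiT_real_ge {u : ℝˣ} (hu : 1 < (u:ℝ)) (n : ℕ) :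
    (Dd n : ℝ) ≤ ev u (chiT n) := by
  rcases Nat.eq_zero_or_pos n with rfl | hn
  · rw [chiT_zero, map_one]
    norm_num [Dd, bitset]
  · have h := chiT_real_ge_strong hu hn
    have hy := y_gt_two hu
    linarith

lemma Dd_pos (n : ℕ) : 0 < Dd n := Nat.pow_pos (by norm_num)

lemma eval_two_eq (Q : Polynomial ℤ) (N : ℕ) (a : ℕ → ℕ)
    (hQ : Polynomial.aeval (T 1 + T (-1)) Q =
      ∑ n ∈ Finset.range (N + 1), (a n : LaurentPolynomial ℤ) * chiT n) :
    Q.eval 2 = ∑ n ∈ Finset.range (N + 1), (a n : ℤ) * (Dd n : ℤ) := by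
  have h1 := key_eq Q N a hQ (1 : ℤˣ)
  simp only [inv_one, Units.val_one, ev_chiT_one] at h1
  rw [show ((1:ℤ) + 1 : ℤ) = 2 by norm_num] at h1
  rw [← h1, Polynomial.coe_aeval_eq_eval]

lemma eval_neg_two_eq (Q : Polynomial ℤ) (N : ℕ) (a : ℕ → ℕ)
    (hQ : Polynomial.aeval (T 1 + T (-1)) Q =
      ∑ n ∈ Finset.range (N + 1), (a n : LaurentPolynomial ℤ) * chiT n) :
    Q.eval (-2) = ∑ n ∈ Finset.range (N + 1), (a n : ℤ) * ((-1)^n * (Dd n : ℤ)) := by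
  have h1 := key_eq Q N a hQ (-1 : ℤˣ)
  simp only [ev_chiT_neg_one] at h1
  rw [show ((-1 : ℤˣ)⁻¹) = -1 by decide] at h1
  simp only [Units.val_neg, Units.val_one] at h1
  rw [show ((-1:ℤ) + -1 : ℤ) = -2 by norm_num] at h1
  rw [← h1, Polynomial.coe_aeval_eq_eval]

lemma neg_one_pow_mod (n : ℕ) : (-1 : ℤ)^n = (-1 : ℤ)^(n % 2) := by
  conv_lhs => rw [← Nat.div_add_mod n 2]
  rw [pow_add, pow_mul]
  norm_num

lemma part3 (Q : Polynomial ℤ) (N : ℕ) (a : ℕ → ℕ)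
    (hQ : Polynomial.aeval (T 1 + T (-1)) Q =
      ∑ n ∈ Finset.range (N + 1), (a n : LaurentPolynomial ℤ) * chiT n) :
    |Q.eval (-2)| = Q.eval 2 ↔
      ∀ n₁ n₂, n₁ ≤ N → n₂ ≤ N → 0 < a n₁ → 0 < a n₂ → n₁ % 2 = n₂ % 2 := by
  set f : ℕ → ℤ := fun n => (a n : ℤ) * (Dd n : ℤ) with hf
  have h2 : Q.eval 2 = ∑ n ∈ Finset.range (N+1), f n := eval_two_eq Q N a hQ
  have hm2 : Q.eval (-2) = ∑ n ∈ Finset.range (N+1), (-1)^n * f n := by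
    rw [eval_neg_two_eq Q N a hQ]
    exact Finset.sum_congr rfl (fun n _ => by rw [hf]; ring)
  have hfnn : ∀ n, (0:ℤ) ≤ f n := fun n => mul_nonneg (by positivity) (by positivity)
  have hfzero : ∀ n, f n = 0 → a n = 0 := by
    intro n h
    rcases mul_eq_zero.mp h with h | h
    · exact_mod_cast h
    · exfalso; have := Dd_pos n; omega
  have h2nn : 0 ≤ Q.eval 2 := h2 ▸ Finset.sum_nonneg (fun n _ => hfnn n)
  constructor
  · intro habs n₁ n₂ hn₁ hn₂ ha₁ ha₂
    rcases (abs_eq h2nn).mp habs with h | h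
    · -- all odd-index coefficients vanish
      have hz : ∀ n ∈ Finset.range (N+1), f n - (-1)^n * f n = 0 := by
        rw [← Finset.sum_eq_zero_iff_of_nonneg]
        · rw [Finset.sum_sub_distrib, ← h2, ← hm2, h]; ring
        · intro n _
          rcases Nat.even_or_odd n with hp | hp
          · rw [hp.neg_one_pow]; ring_nf; simp
          · rw [hp.neg_one_pow]; linarith [hfnn n]
      have hodd : ∀ n, n ≤ N → Odd n → a n = 0 := by
        intro n hn hp
        have := hz n (Finset.mem_range.mpr (by omega))
        rw [hp.neg_one_pow] at this
        exact hfzero n (by linarith)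
      have e₁ : ¬ Odd n₁ := fun hp => by have := hodd n₁ hn₁ hp; omega
      have e₂ : ¬ Odd n₂ := fun hp => by have := hodd n₂ hn₂ hp; omega
      rw [Nat.odd_iff] at e₁ e₂
      omega
    · -- all even-index coefficients vanish
      have hz : ∀ n ∈ Finset.range (N+1), f n + (-1)^n * f n = 0 := by
        rw [← Finset.sum_eq_zero_iff_of_nonneg]
        · rw [Finset.sum_add_distrib, ← h2, ← hm2, h]; ring
        · intro n _
          rcases Nat.even_or_odd n with hp | hp
          · rw [hp.neg_one_pow]; linarith [hfnn n]
          · rw [hp.neg_one_pow]; ring_nf; simp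
      have heven : ∀ n, n ≤ N → Even n → a n = 0 := by
        intro n hn hp
        have := hz n (Finset.mem_range.mpr (by omega))
        rw [hp.neg_one_pow] at this
        exact hfzero n (by linarith)
      have e₁ : ¬ Even n₁ := fun hp => by have := heven n₁ hn₁ hp; omega
      have e₂ : ¬ Even n₂ := fun hp => by have := heven n₂ hn₂ hp; omega
      rw [Nat.even_iff] at e₁ e₂
      omega
  · intro hpar
    by_cases hex : ∃ n₀, n₀ ≤ N ∧ 0 < a n₀
    · obtain ⟨n₀, hn₀, ha₀⟩ := hex
      have hcong : ∀ n ∈ Finset.range (N+1), (-1:ℤ)^n * f n = (-1)^(n₀) * f n := by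
        intro n hn
        by_cases h0 : a n = 0
        · have hz : f n = 0 := by rw [hf]; simp [h0]
          rw [hz, mul_zero, mul_zero]
        · have hp := hpar n n₀ (by have := Finset.mem_range.mp hn; omega) hn₀
            (Nat.pos_of_ne_zero h0) ha₀
          rw [neg_one_pow_mod n, neg_one_pow_mod n₀, hp]
      rw [hm2, Finset.sum_congr rfl hcong, ← Finset.mul_sum, ← h2, abs_mul]
      have habs1 : |(-1:ℤ)^n₀| = 1 := by
        rcases Nat.even_or_odd n₀ with hp | hp
        · rw [hp.neg_one_pow]; norm_num
        · rw [hp.neg_one_pow]; norm_num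
      rw [habs1, one_mul, abs_of_nonneg h2nn]
    · push_neg at hex
      have hz : ∀ n ∈ Finset.range (N+1), f n = 0 := by
        intro n hn
        have h0 := hex n (by have := Finset.mem_range.mp hn; omega)
        rw [hf]
        have : a n = 0 := by omega
        simp [this]
      rw [hm2, h2, Finset.sum_eq_zero hz,
        Finset.sum_eq_zero (fun n hn => by rw [hz n hn, mul_zero])]
      norm_num

lemma aeval_real_lower (Q : Polynomial ℤ) (N : ℕ) (a : ℕ → ℕ)
    (hQ : Polynomial.aeval (T 1 + T (-1)) Q =
      ∑ n ∈ Finset.range (N + 1), (a n : LaurentPolynomial ℤ) * chiT n)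
    {n₀ : ℕ} (hn₀1 : 1 ≤ n₀) (hn₀N : n₀ ≤ N) (ha₀ : 0 < a n₀)
    {t : ℝ} (ht : 1 < t) :
    ((Q.eval 2 : ℤ) : ℝ) + (t + t⁻¹ - 2) ≤ Polynomial.aeval (t + t⁻¹) Q := by
  have ht0 : t ≠ 0 := by positivity
  set u : ℝˣ := Units.mk0 t ht0 with hu
  have hu1 : (u : ℝ) = t := rfl
  have hkey := key_eq Q N a hQ u
  have hinv : ((u⁻¹ : ℝˣ) : ℝ) = t⁻¹ := by rw [Units.val_inv_eq_inv_val, hu1]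
  rw [hu1, hinv] at hkey
  rw [hkey]
  have h2 : ((Q.eval 2 : ℤ) : ℝ) = ∑ n ∈ Finset.range (N+1), (a n : ℝ) * (Dd n : ℝ) := by
    rw [eval_two_eq Q N a hQ]
    push_cast
    rfl
  rw [h2]
  have hterm : ∀ n ∈ Finset.range (N+1),
      (a n : ℝ) * (Dd n : ℝ) ≤ (a n : ℝ) * ev u (chiT n) := fun n _ =>
    mul_le_mul_of_nonneg_left (chiT_real_ge (hu1 ▸ ht) n) (by positivity)
  have hsum := Finset.sum_le_sum hterm
  have hmem : n₀ ∈ Finset.range (N+1) := Finset.mem_range.mpr (by omega)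
  have hstrong := chiT_real_ge_strong (u := u) (hu1 ▸ ht) hn₀1
  rw [hu1] at hstrong
  have ha1 : (1:ℝ) ≤ (a n₀ : ℝ) := by exact_mod_cast ha₀
  have hy : 2 < t + t⁻¹ := y_gt_two ht
  -- extract the n₀ term
  have hsplit : ∀ (g : ℕ → ℝ), (∀ n ∈ Finset.range (N+1), 0 ≤ g n) →
      g n₀ ≤ ∑ n ∈ Finset.range (N+1), g n := fun g hg =>
    Finset.single_le_sum hg hmem
  have := hsplit (fun n => (a n : ℝ) * ev u (chiT n) - (a n : ℝ) * (Dd n : ℝ))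
    (fun n hn => by
      have := hterm n hn
      simp only [sub_nonneg]
      linarith)
  rw [Finset.sum_sub_distrib] at this
  have hterm₀ : (t + t⁻¹ - 2) ≤ (a n₀ : ℝ) * ev u (chiT n₀) - (a n₀ : ℝ) * (Dd n₀ : ℝ) := by
    have h1 : (a n₀ : ℝ) * ((Dd n₀ : ℝ) + (t + t⁻¹ - 2)) ≤ (a n₀ : ℝ) * ev u (chiT n₀) :=
      mul_le_mul_of_nonneg_left hstrong (by positivity)
    nlinarith [h1, ha1, hy]
  linarith

lemma part1 (Q : Polynomial ℤ) (N : ℕ) (a : ℕ → ℕ)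
    (hnontriv : ∃ n, 1 ≤ n ∧ n ≤ N ∧ 0 < a n)
    (hQ : Polynomial.aeval (T 1 + T (-1)) Q =
      ∑ n ∈ Finset.range (N + 1), (a n : LaurentPolynomial ℤ) * chiT n) :
    0 < Q.derivative.eval 2 := by
  obtain ⟨n₀, hn₀1, hn₀N, ha₀⟩ := hnontriv
  set f : ℝ → ℝ := fun x => Polynomial.aeval x Q with hfdef
  have hder : HasDerivAt f (Polynomial.aeval (2:ℝ) Q.derivative) 2 :=
    Polynomial.hasDerivAt_aeval (q := Q) (2:ℝ)
  have hd : Polynomial.aeval (2:ℝ) Q.derivative = ((Q.derivative.eval 2 : ℤ) : ℝ) := by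
    rw [show ((2:ℝ)) = algebraMap ℤ ℝ 2 by norm_num,
      Polynomial.aeval_algebraMap_apply_eq_algebraMap_eval]
    simp
  have hf2 : f 2 = ((Q.eval 2 : ℤ) : ℝ) := by
    rw [hfdef]
    simp only
    rw [show ((2:ℝ)) = algebraMap ℤ ℝ 2 by norm_num,
      Polynomial.aeval_algebraMap_apply_eq_algebraMap_eval]
    simp
  -- slope along the curve t ↦ t + t⁻¹
  have hslope : ∀ t : ℝ, 1 < t → 1 ≤ slope f 2 (t + t⁻¹) := by
    intro t ht
    have hy : 2 < t + t⁻¹ := y_gt_two ht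
    have hlow := aeval_real_lower Q N a hQ hn₀1 hn₀N ha₀ ht
    rw [slope_def_field, le_div_iff₀ (by linarith)]
    rw [hf2]
    have : f (t + t⁻¹) = Polynomial.aeval (t + t⁻¹) Q := rfl
    rw [this]
    linarith
  have hφ : Filter.Tendsto (fun t : ℝ => t + t⁻¹) (nhdsWithin 1 (Set.Ioi 1))
      (nhdsWithin 2 {(2:ℝ)}ᶜ) := by
    apply tendsto_nhdsWithin_of_tendsto_nhds_of_eventually_within
    · have hc : ContinuousAt (fun t : ℝ => t + t⁻¹) 1 :=
        continuousAt_id.add (continuousAt_inv₀ one_ne_zero)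
      have := hc.tendsto
      norm_num at this
      exact this.mono_left nhdsWithin_le_nhds
    · filter_upwards [self_mem_nhdsWithin] with t ht
      simp only [Set.mem_compl_iff, Set.mem_singleton_iff]
      exact (y_gt_two ht).ne'
  have htend := (hasDerivAt_iff_tendsto_slope.mp hder).comp hφ
  have hge : 1 ≤ Polynomial.aeval (2:ℝ) Q.derivative := by
    apply ge_of_tendsto htend
    filter_upwards [self_mem_nhdsWithin] with t ht
    exact hslope t ht
  rw [hd] at hge
  exact_mod_cast lt_of_lt_of_le zero_lt_one hge

lemma part2 (Q : Polynomial ℤ) (N : ℕ) (a : ℕ → ℕ)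
    (hnontriv : ∃ n, 1 ≤ n ∧ n ≤ N ∧ 0 < a n)
    (hQ : Polynomial.aeval (T 1 + T (-1)) Q =
      ∑ n ∈ Finset.range (N + 1), (a n : LaurentPolynomial ℤ) * chiT n) :
    ∀ y : ℝ, -2 < y → y < 2 → |Polynomial.aeval y Q| < ((Q.eval 2 : ℤ) : ℝ) := by
  obtain ⟨n₀, hn₀1, hn₀N, ha₀⟩ := hnontriv
  intro y hy1 hy2
  set θ : ℝ := Real.arccos (y / 2) with hθ
  have hθ0 : 0 < θ := Real.arccos_pos.mpr (by linarith)
  have hθπ : θ < Real.pi := by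
    rw [hθ, Real.arccos]
    have := Real.neg_pi_div_two_lt_arcsin (x := y/2)
    have h2 := this.mpr (by linarith)
    linarith
  have hsin : 0 < Real.sin θ := Real.sin_pos_of_pos_of_lt_pi hθ0 hθπ
  have hcos : Real.cos θ = y / 2 := Real.cos_arccos (by linarith) (by linarith)
  set u : ℂˣ := Units.mk0 (Complex.exp (θ * Complex.I)) (Complex.exp_ne_zero _) with hudef
  have hu1 : (u : ℂ) = Complex.exp (θ * Complex.I) := rfl
  have hnorm : ‖(u : ℂ)‖ = 1 := by
    rw [hu1, Complex.norm_exp_ofReal_mul_I]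
  have him : (u : ℂ).im = Real.sin θ := by rw [hu1, Complex.exp_ofReal_mul_I_im]
  have hu2 : ((u : ℂ))^2 ≠ 1 := by
    intro h
    have hfac : ((u:ℂ) - 1) * ((u:ℂ) + 1) = 0 := by linear_combination h
    rcases mul_eq_zero.mp hfac with h' | h'
    · have : (u:ℂ) = 1 := by linear_combination h'
      have := congrArg Complex.im this
      rw [him] at this
      simp at this
      linarith
    · have : (u:ℂ) = -1 := by linear_combination h'
      have := congrArg Complex.im this
      rw [him] at this
      simp at this
      linarith
  have hsum : (u : ℂ) + ((u⁻¹ : ℂˣ) : ℂ) = ((y : ℝ) : ℂ) := by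
    rw [Units.val_inv_eq_inv_val, hu1, ← Complex.exp_neg]
    rw [show -((θ:ℂ) * Complex.I) = ((-θ : ℝ) : ℂ) * Complex.I by push_cast; ring]
    rw [Complex.exp_mul_I, Complex.exp_mul_I]
    rw [show ((-θ : ℝ) : ℂ) = -(θ:ℂ) by push_cast; ring, Complex.cos_neg, Complex.sin_neg]
    rw [← Complex.ofReal_cos]
    rw [hcos]
    push_cast
    ring
  have hkey := key_eq Q N a hQ u
  rw [hsum] at hkey
  have hL : Polynomial.aeval ((y:ℝ):ℂ) Q = ((Polynomial.aeval y Q : ℝ) : ℂ) := by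
    rw [show (((y:ℝ)):ℂ) = algebraMap ℝ ℂ y by rfl,
      Polynomial.aeval_algebraMap_apply]
    rfl
  rw [hL] at hkey
  have habs : |Polynomial.aeval y Q| = ‖∑ n ∈ Finset.range (N + 1),
      ((a n : ℂ) * ev u (chiT n))‖ := by
    rw [← hkey, Complex.norm_real, Real.norm_eq_abs]
  rw [habs]
  have hQ2 : ((Q.eval 2 : ℤ) : ℝ) = ∑ n ∈ Finset.range (N+1), (a n : ℝ) * (Dd n : ℝ) := by
    rw [eval_two_eq Q N a hQ]; push_cast; rfl
  rw [hQ2]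
  calc ‖∑ n ∈ Finset.range (N + 1), ((a n : ℂ) * ev u (chiT n))‖
      ≤ ∑ n ∈ Finset.range (N + 1), (a n : ℝ) * ‖ev u (chiT n)‖ := by
        refine le_trans (norm_sum_le _ _) (Finset.sum_le_sum fun n _ => ?_)
        rw [norm_mul]
        apply mul_le_mul_of_nonneg_right _ (norm_nonneg _)
        rw [Complex.norm_natCast]
  _ < ∑ n ∈ Finset.range (N+1), (a n : ℝ) * (Dd n : ℝ) := by
        apply Finset.sum_lt_sum
        · intro n _
          exact mul_le_mul_of_nonneg_left (chiT_norm_le hnorm n) (by positivity)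
        · refine ⟨n₀, Finset.mem_range.mpr (by omega), ?_⟩
          exact mul_lt_mul_of_pos_left (chiT_norm_lt hnorm hu2 hn₀1)
            (by exact_mod_cast ha₀)
end Aux

theorem tilting_character_bounds (Q : Polynomial ℤ) (N : ℕ) (a : ℕ → ℕ)
    (hnontriv : ∃ n, 1 ≤ n ∧ n ≤ N ∧ 0 < a n)
    (hQ : Polynomial.aeval (T 1 + T (-1)) Q =
      ∑ n ∈ Finset.range (N + 1), (a n : LaurentPolynomial ℤ) * chiT n) :
    0 < Q.derivative.eval 2 ∧
    (∀ y : ℝ, -2 < y → y < 2 →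
      |Polynomial.aeval y Q| < ((Q.eval 2 : ℤ) : ℝ)) ∧
    (|Q.eval (-2)| = Q.eval 2 ↔
      ∀ n₁ n₂, n₁ ≤ N → n₂ ≤ N → 0 < a n₁ → 0 < a n₂ → n₁ % 2 = n₂ % 2) :=
  ⟨part1 Q N a hnontriv hQ, part2 Q N a hnontriv hQ, part3 Q N a hQ⟩
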